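/- arXiv:2010.13332 — 5 statements merged into one kernel-verified Lean document; each statement's English description precedes it below -/
import Mathlib

section
/- For a symmetric positive definite (p+1)×(p+1) matrix Σ with entries σⱼₖ, σ₁² = σ₁₁, r₁ⱼ = (Σ⁻¹)₁ⱼ, and any κ ≥ −1/2, the quantity c₁ := (1+κ) σ₁² (r₁₁² σ₁² − r₁₁) + (1+2κ)(1 − r₁₁ σ₁²)² is nonnegative. -/
open Matrix

theorem stmt5 (p : ℕ) (S : Matrix (Fin (p + 1)) (Fin (p + 1)) ℝ)
    (hS : S.PosDef) (κ : ℝ) (hκ : -1/2 ≤ κ) :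
    0 ≤ (1 + κ) * S 0 0 * ((S⁻¹ 0 0) ^ 2 * S 0 0 - S⁻¹ 0 0) +
        (1 + 2 * κ) * (1 - S⁻¹ 0 0 * S 0 0) ^ 2 := by
  set a := S 0 0 with haeq
  set b := S⁻¹ 0 0 with hbeq
  have hdet : IsUnit S.det := isUnit_iff_ne_zero.mpr (ne_of_gt hS.det_pos)
  have hSinv : (S⁻¹).PosDef := hS.inv
  have ha : 0 < a := by
    have := hS.dotProduct_mulVec_pos (x := Pi.single 0 1) (by simp [Function.ne_iff])
    simpa [dotProduct, Matrix.mulVec, Pi.single_apply, Finset.sum_ite_eq,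
      Finset.mul_sum] using this
  have hb : 0 < b := by
    have := hSinv.dotProduct_mulVec_pos (x := Pi.single 0 1) (by simp [Function.ne_iff])
    simpa [dotProduct, Matrix.mulVec, Pi.single_apply, Finset.sum_ite_eq,
      Finset.mul_sum] using this
  have hsymm : Sᵀ = S := by
    have := hS.isHermitian.eq
    simpa [Matrix.conjTranspose_eq_transpose_of_trivial] using this
  -- Cauchy–Schwarz: a * b ≥ 1
  have hab : 1 ≤ a * b := by
    set e : Fin (p+1) → ℝ := Pi.single 0 1 with he
    set y : Fin (p+1) → ℝ := S⁻¹ *ᵥ e with hy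
    set x : Fin (p+1) → ℝ := e - a • y with hx
    have hq : 0 ≤ dotProduct (star x) (S *ᵥ x) := hS.posSemidef.dotProduct_mulVec_nonneg x
    have hSy : S *ᵥ y = e := by
      rw [hy, Matrix.mulVec_mulVec, Matrix.mul_nonsing_inv S hdet, Matrix.one_mulVec]
    have hSx : S *ᵥ x = S *ᵥ e - a • e := by
      rw [hx, Matrix.mulVec_sub, Matrix.mulVec_smul, hSy]
    have hew : dotProduct e (S *ᵥ e) = a := by
      simp [he, dotProduct, Matrix.mulVec, Pi.single_apply, Finset.sum_ite_eq,
        Finset.mul_sum, haeq]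
    have hye : dotProduct y e = b := by
      simp [he, hy, dotProduct, Matrix.mulVec, Pi.single_apply, Finset.sum_ite_eq,
        Finset.mul_sum, hbeq]
    have hee : dotProduct e e = 1 := by simp [he, dotProduct, Pi.single_apply]
    have hyw : dotProduct y (S *ᵥ e) = 1 := by
      rw [Matrix.dotProduct_mulVec]
      have hvm : y ᵥ* S = e := by
        rw [← hsymm, Matrix.vecMul_transpose, hSy]
      rw [hvm, hee]
    have hqval : dotProduct (star x) (S *ᵥ x) = a - 2*a + a^2 * b := by
      have hstar : star x = x := by simp
      rw [hstar, hSx, hx]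
      rw [sub_dotProduct, dotProduct_sub, dotProduct_sub,
        smul_dotProduct, smul_dotProduct, dotProduct_smul,
        dotProduct_smul, hew, hee, hye, hyw]
      simp only [smul_eq_mul]
      ring
    rw [hqval] at hq
    nlinarith
  nlinarith [mul_nonneg hb.le (sub_nonneg.mpr hab), sq_nonneg (1 - b*a),
    mul_nonneg (mul_nonneg (by linarith : (0:ℝ) ≤ 1 + κ) hb.le) (sub_nonneg.mpr hab),
    mul_nonneg (by linarith : (0:ℝ) ≤ 1 + 2*κ) (sq_nonneg (1 - b*a))]
end

section
/- Let f(β₂) = −r₁₁²((1+2κ)σ₁₂² + (1+κ)σ₁²σ₂²)·c·β₂² + (1+κ)·c·(2r₁₁ − r₁₁²σ₁²)σ², where c = 1/q₋₁ − 1/q₁ > 0, κ > −1/2, σ² > 0, σ₁²σ₂² > σ₁₂² > 0, and r₁₁ = σ₂²/(σ₁²σ₂² − σ₁₂²). If σ₁²σ₂² > 2σ₁₂², then f(β₂) > 0 if and only if |β₂| < C/2 where C = √(4(σ₁²σ₂² − 2σ₁₂²)σ² / (((1+2κ)/(1+κ))σ₁₂² + σ₁²σ₂²) / σ₂²). -/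
set_option maxHeartbeats 1000000 in
theorem stmt9 (s1 s2 s12 σsq κ q1 qm1 : ℝ)
    (hκ : -1/2 < κ) (hσ : 0 < σsq)
    (hs12pos : 0 < s12 ^ 2) (hpd : s12 ^ 2 < s1 * s2)
    (hq : 0 < 1 / qm1 - 1 / q1)
    (r11 : ℝ) (hr : r11 = s2 / (s1 * s2 - s12 ^ 2))
    (f : ℝ → ℝ)
    (hf : ∀ β2, f β2 =
      -r11 ^ 2 * ((1 + 2 * κ) * s12 ^ 2 + (1 + κ) * s1 * s2) *
          (1 / qm1 - 1 / q1) * β2 ^ 2 +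
        (1 + κ) * (1 / qm1 - 1 / q1) * (2 * r11 - r11 ^ 2 * s1) * σsq)
    (hcond : 2 * s12 ^ 2 < s1 * s2)
    (C : ℝ)
    (hC : C = Real.sqrt (4 * (s1 * s2 - 2 * s12 ^ 2) * σsq /
      ((((1 + 2 * κ) / (1 + κ)) * s12 ^ 2 + s1 * s2) * s2))) :
    ∀ β2, f β2 > 0 ↔ |β2| < C / 2 := by
  intro β2
  have hss : 0 < s1 * s2 := lt_trans hs12pos hpd
  have hd : 0 < s1 * s2 - s12 ^ 2 := by linarith
  have hdne : s1 * s2 - s12 ^ 2 ≠ 0 := ne_of_gt hd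
  have hκ1 : 0 < 1 + κ := by linarith
  have hκ2 : 0 < 1 + 2 * κ := by linarith
  have hκ1ne : (1 : ℝ) + κ ≠ 0 := ne_of_gt hκ1
  have hP : 0 < (1 + 2 * κ) * s12 ^ 2 + (1 + κ) * (s1 * s2) := by positivity
  have hPne : (1 + 2 * κ) * s12 ^ 2 + (1 + κ) * (s1 * s2) ≠ 0 := ne_of_gt hP
  have hc : 0 < 1 / qm1 - 1 / q1 := hq
  have hs2ne : s2 ≠ 0 := by
    intro h; rw [h] at hss; simp at hss
  rcases hs2ne.lt_or_gt with hs2 | hs2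
  · -- s2 < 0 : both sides false
    have hr11neg : r11 < 0 := by
      rw [hr]; exact div_neg_of_neg_of_pos hs2 hd
    have hconst : 2 * r11 - r11 ^ 2 * s1 < 0 := by
      have : 2 * r11 - r11 ^ 2 * s1 = r11 * (s1 * s2 - 2 * s12 ^ 2) / (s1 * s2 - s12 ^ 2) := by
        rw [hr]; field_simp; ring
      rw [this]
      apply div_neg_of_neg_of_pos _ hd
      exact mul_neg_of_neg_of_pos hr11neg (by linarith)
    have hfneg : f β2 ≤ 0 := by
      rw [hf β2]
      have h1 : 0 ≤ r11 ^ 2 * ((1 + 2 * κ) * s12 ^ 2 + (1 + κ) * (s1 * s2)) *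
          ((1 / qm1 - 1 / q1) * β2 ^ 2) :=
        mul_nonneg (mul_nonneg (sq_nonneg r11) hP.le)
          (mul_nonneg hc.le (sq_nonneg β2))
      have h2 : (1 + κ) * (1 / qm1 - 1 / q1) * (2 * r11 - r11 ^ 2 * s1) * σsq < 0 := by
        apply mul_neg_of_neg_of_pos _ hσ
        exact mul_neg_of_pos_of_neg (by positivity) hconst
      nlinarith
    have hC0 : C = 0 := by
      rw [hC, Real.sqrt_eq_zero']
      apply div_nonpos_of_nonneg_of_nonpos
      · have : 0 < s1 * s2 - 2 * s12 ^ 2 := by linarith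
        positivity
      · apply mul_nonpos_of_nonneg_of_nonpos _ (le_of_lt hs2)
        have : 0 < (1 + 2 * κ) / (1 + κ) := by positivity
        nlinarith
    constructor
    · intro h; linarith
    · intro h
      rw [hC0] at h
      norm_num at h
      exact absurd h (not_lt.2 (abs_nonneg β2))
  · -- s2 > 0
    have hr11pos : 0 < r11 := by
      rw [hr]; exact div_pos hs2 hd
    set K : ℝ := (1 + κ) * (s1 * s2 - 2 * s12 ^ 2) * σsq /
        (s2 * ((1 + 2 * κ) * s12 ^ 2 + (1 + κ) * (s1 * s2))) with hK
    have hKpos : 0 < K := by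
      apply div_pos _ (by positivity)
      have : 0 < s1 * s2 - 2 * s12 ^ 2 := by linarith
      positivity
    have hfeq : f β2 = r11 ^ 2 * ((1 + 2 * κ) * s12 ^ 2 + (1 + κ) * (s1 * s2)) *
        (1 / qm1 - 1 / q1) * (K - β2 ^ 2) := by
      rw [hf β2, hK, hr]
      have hP' : s12 ^ 2 * (1 + 2 * κ) + s2 * s1 * (1 + κ) ≠ 0 := by
        intro h; apply hPne; linear_combination h
      field_simp
      ring
    have hpos : 0 < r11 ^ 2 * ((1 + 2 * κ) * s12 ^ 2 + (1 + κ) * (s1 * s2)) *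
        (1 / qm1 - 1 / q1) := by positivity
    have hlhs : f β2 > 0 ↔ β2 ^ 2 < K := by
      rw [hfeq, gt_iff_lt, mul_pos_iff_of_pos_left hpos, sub_pos]
    have hCK : C / 2 = Real.sqrt K := by
      have harg : 4 * (s1 * s2 - 2 * s12 ^ 2) * σsq /
          ((((1 + 2 * κ) / (1 + κ)) * s12 ^ 2 + s1 * s2) * s2) = 4 * K := by
        rw [hK]
        field_simp
      rw [hC, harg, show (4 : ℝ) * K = 2 ^ 2 * K by ring,
        Real.sqrt_mul (by positivity), Real.sqrt_sq (by norm_num : (0:ℝ) ≤ 2)]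
      ring
    rw [hlhs, hCK, ← sq_abs β2]
    exact (Real.lt_sqrt (abs_nonneg β2)).symm
end

section
/- Fix σ₂², σ₁₂, σ², κ with σ₂² > 0, σ² > 0, κ > −1/2, σ₁₂ ≠ 0. Define C(σ₁²) = √(4(σ₁²σ₂² − 2σ₁₂²)σ² / ((((1+2κ)/(1+κ))σ₁₂² + σ₁²σ₂²)σ₂²)) for σ₁² > 2σ₁₂²/σ₂². Then C is strictly increasing in σ₁² on (2σ₁₂²/σ₂², ∞). -/
theorem stmt11 (s2 s12 σsq κ : ℝ)
    (hs2 : 0 < s2) (hσ : 0 < σsq) (hκ : -1/2 < κ) (hs12 : s12 ≠ 0) :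
    StrictMonoOn (fun s1 : ℝ =>
      Real.sqrt (4 * (s1 * s2 - 2 * s12 ^ 2) * σsq /
        ((((1 + 2 * κ) / (1 + κ)) * s12 ^ 2 + s1 * s2) * s2)))
      (Set.Ioi (2 * s12 ^ 2 / s2)) := by
  have h1κ : 0 < 1 + κ := by linarith
  have h2κ : 0 < 1 + 2 * κ := by linarith
  have hs12sq : 0 < s12 ^ 2 := by positivity
  have ha : 0 < (1 + 2 * κ) / (1 + κ) * s12 ^ 2 := by positivity
  intro x hx y hy hxy
  simp only [Set.mem_Ioi] at hx hy
  rw [div_lt_iff₀ hs2] at hx hy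
  have hdx : 0 < ((1 + 2 * κ) / (1 + κ) * s12 ^ 2 + x * s2) * s2 := by
    have : 0 < (1 + 2 * κ) / (1 + κ) * s12 ^ 2 + x * s2 := by nlinarith
    exact mul_pos this hs2
  have hdy : 0 < ((1 + 2 * κ) / (1 + κ) * s12 ^ 2 + y * s2) * s2 := by
    have : 0 < (1 + 2 * κ) / (1 + κ) * s12 ^ 2 + y * s2 := by nlinarith
    exact mul_pos this hs2
  apply Real.sqrt_lt_sqrt
  · apply div_nonneg _ hdx.le
    nlinarith
  · rw [div_lt_div_iff₀ hdx hdy]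
    nlinarith [mul_pos (mul_pos hσ hs2) (mul_pos hs2 (sub_pos.mpr hxy)),
      mul_pos ha (mul_pos (mul_pos hσ hs2) (mul_pos hs2 (sub_pos.mpr hxy)))]
end

section
/- Fix σ₁², σ₂², σ², κ with σ₁², σ₂², σ² > 0 and κ > −1/2. The function C(σ₁₂) = √(4(σ₁²σ₂² − 2σ₁₂²)σ² / ((((1+2κ)/(1+κ))σ₁₂² + σ₁²σ₂²)σ₂²)), defined for σ₁₂² < σ₁²σ₂²/2, is strictly increasing on (−√(σ₁²σ₂²/2), 0) and strictly decreasing on (0, √(σ₁²σ₂²/2)). -/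
lemma key12 (s1 s2 σsq κ : ℝ)
    (hs1 : 0 < s1) (hs2 : 0 < s2) (hσ : 0 < σsq) (hκ : -1/2 < κ)
    (t1 t2 : ℝ) (ht1 : 0 ≤ t1) (h12 : t1 < t2) (ht2 : t2 < s1 * s2 / 2) :
    Real.sqrt (4 * (s1 * s2 - 2 * t2) * σsq /
          ((((1 + 2 * κ) / (1 + κ)) * t2 + s1 * s2) * s2)) <
    Real.sqrt (4 * (s1 * s2 - 2 * t1) * σsq /
          ((((1 + 2 * κ) / (1 + κ)) * t1 + s1 * s2) * s2)) := by
  set a : ℝ := (1 + 2 * κ) / (1 + κ) with ha_def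
  have ha : 0 < a := div_pos (by linarith) (by linarith)
  have hD2 : 0 < (a * t2 + s1 * s2) * s2 := by
    have : 0 < a * t2 + s1 * s2 := by nlinarith
    positivity
  have hD1 : 0 < (a * t1 + s1 * s2) * s2 := by
    have : 0 < a * t1 + s1 * s2 := by nlinarith
    positivity
  apply Real.sqrt_lt_sqrt
  · apply div_nonneg _ hD2.le
    nlinarith
  · rw [div_lt_div_iff₀ hD2 hD1]
    nlinarith [mul_pos (mul_pos (mul_pos hσ hs2) (mul_pos (sub_pos.2 h12) (mul_pos hs1 hs2))) (show (0:ℝ) < a + 2 by linarith)]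

theorem stmt12 (s1 s2 σsq κ : ℝ)
    (hs1 : 0 < s1) (hs2 : 0 < s2) (hσ : 0 < σsq) (hκ : -1/2 < κ) :
    StrictMonoOn (fun s12 : ℝ =>
        Real.sqrt (4 * (s1 * s2 - 2 * s12 ^ 2) * σsq /
          ((((1 + 2 * κ) / (1 + κ)) * s12 ^ 2 + s1 * s2) * s2)))
        (Set.Ioo (-Real.sqrt (s1 * s2 / 2)) 0) ∧
    StrictAntiOn (fun s12 : ℝ =>
        Real.sqrt (4 * (s1 * s2 - 2 * s12 ^ 2) * σsq /
          ((((1 + 2 * κ) / (1 + κ)) * s12 ^ 2 + s1 * s2) * s2)))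
        (Set.Ioo (0 : ℝ) (Real.sqrt (s1 * s2 / 2))) := by
  have hhalf : (0:ℝ) ≤ s1 * s2 / 2 := by positivity
  have hsq : Real.sqrt (s1 * s2 / 2) ^ 2 = s1 * s2 / 2 := Real.sq_sqrt hhalf
  have hsnn := Real.sqrt_nonneg (s1 * s2 / 2)
  constructor
  · intro x hx y hy hxy
    obtain ⟨hx1, hx2⟩ := hx
    obtain ⟨hy1, hy2⟩ := hy
    have hxlt : x ^ 2 < s1 * s2 / 2 := by
      have := sq_lt_sq' hx1 (lt_of_lt_of_le hx2 hsnn)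
      linarith [hsq ▸ this]
    have hyx : y ^ 2 < x ^ 2 := by nlinarith
    exact key12 s1 s2 σsq κ hs1 hs2 hσ hκ (y ^ 2) (x ^ 2) (sq_nonneg y) hyx hxlt
  · intro x hx y hy hxy
    obtain ⟨hx1, hx2⟩ := hx
    obtain ⟨hy1, hy2⟩ := hy
    have hylt : y ^ 2 < s1 * s2 / 2 := by
      have := sq_lt_sq' (lt_of_le_of_lt (neg_nonpos_of_nonneg hsnn) hy1) hy2
      linarith [hsq ▸ this]
    have hxy2 : x ^ 2 < y ^ 2 := by nlinarith
    exact key12 s1 s2 σsq κ hs1 hs2 hσ hκ (x ^ 2) (y ^ 2) (sq_nonneg x) hxy2 hylt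
end

section
/- Let p ≥ 3, κ > −1/2, and let Σₓ be the exchangeable covariance matrix as above, positive definite. If ((p−2)σ₂'₃' + σ₂'²)σ₁² < 2(p−1)σ₁₂'², then 2r₁₁ − r₁₁²σ₁² < 0, where r₁₁ = ((p−2)σ₂'₃' + σ₂'²)/(−(p−1)σ₁₂'² + (p−2)σ₁²σ₂'₃' + σ₁²σ₂'²). -/
theorem stmt15 (p : ℕ) (hp : 3 ≤ p) (κ s1 s2' s12' s2'3' : ℝ)
    (hκ : -1/2 < κ)
    (Sx : Matrix (Fin p) (Fin p) ℝ)
    (hSx : ∀ i j : Fin p, Sx i j =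
      if i = j then (if i = (⟨0, by omega⟩ : Fin p) then s1 else s2')
      else if i = (⟨0, by omega⟩ : Fin p) ∨ j = (⟨0, by omega⟩ : Fin p) then s12' else s2'3')
    (hpd : Sx.PosDef)
    (hcond : (((p : ℝ) - 2) * s2'3' + s2') * s1 < 2 * ((p : ℝ) - 1) * s12' ^ 2)
    (r11 : ℝ)
    (hr : r11 = (((p : ℝ) - 2) * s2'3' + s2') /
      (-((p : ℝ) - 1) * s12' ^ 2 + ((p : ℝ) - 2) * s1 * s2'3' + s1 * s2')) :
    2 * r11 - r11 ^ 2 * s1 < 0 := by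
  have h0 : (0 : ℕ) < p := by omega
  have h1 : (1 : ℕ) < p := by omega
  set z0 : Fin p := ⟨0, h0⟩ with hz0
  set z1 : Fin p := ⟨1, h1⟩ with hz1
  have hz01 : z1 ≠ z0 := by simp [hz0, hz1, Fin.ext_iff]
  have hpR : (3 : ℝ) ≤ (p : ℝ) := by exact_mod_cast hp
  -- key quadratic form evaluation
  have key : ∀ a b : ℝ, ¬(a = 0 ∧ b = 0) →
      0 < s1 * a ^ 2 + 2 * ((p : ℝ) - 1) * s12' * a * b +
        (((p : ℝ) - 1) * s2' + ((p : ℝ) - 1) * ((p : ℝ) - 2) * s2'3') * b ^ 2 := by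
    intro a b hab
    set x : Fin p → ℝ := fun i => if i = z0 then a else b with hx
    have hxne : x ≠ 0 := by
      intro h
      apply hab
      constructor
      · have := congrFun h z0
        simpa [hx] using this
      · have := congrFun h z1
        simpa [hx, hz01] using this
    have hpos := hpd.dotProduct_mulVec_pos hxne
    have hstar : star x = x := rfl
    rw [hstar] at hpos
    have hinner : ∀ i : Fin p, (Sx.mulVec x) i =
        if i = z0 then s1 * a + ((p : ℝ) - 1) * (s12' * b)
        else s12' * a + s2' * b + ((p : ℝ) - 2) * (s2'3' * b) := by
      intro i
      have hmv : Sx.mulVec x i = ∑ j, Sx i j * x j := rfl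
      rw [hmv]
      by_cases hi : i = z0
      · rw [if_pos hi]
        have hterm : ∀ j : Fin p, Sx i j * x j =
            s12' * b + (if j = i then s1 * a - s12' * b else 0) := by
          intro j
          rw [hSx]
          by_cases hj : j = i
          · rw [hj, if_pos rfl, if_pos hi, if_pos rfl]
            have : x i = a := by simp [hx, hi]
            rw [this]; ring
          · have hij : ¬ i = j := fun h => hj h.symm
            have hjz : ¬ j = z0 := fun h => hj (h.trans hi.symm)
            rw [if_neg hij, if_pos (Or.inl hi), if_neg hj]
            have : x j = b := by simp [hx, hjz]
            rw [this]; ring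
        rw [Finset.sum_congr rfl (fun j _ => hterm j)]
        rw [Finset.sum_add_distrib, Finset.sum_const, Finset.sum_ite_eq' Finset.univ i]
        simp [Finset.card_univ]
        ring
      · rw [if_neg hi]
        have hterm : ∀ j : Fin p, Sx i j * x j =
            s2'3' * b + (if j = i then s2' * b - s2'3' * b else 0) +
              (if j = z0 then s12' * a - s2'3' * b else 0) := by
          intro j
          rw [hSx]
          by_cases hj : j = i
          · have hjz : ¬ j = z0 := fun h => hi (hj.symm.trans h)
            rw [hj, if_pos rfl, if_neg hi, if_pos rfl]
            have : x i = b := by simp [hx, hi]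
            rw [this, if_neg (fun h : i = z0 => hi h)]
            ring
          · have hij : ¬ i = j := fun h => hj h.symm
            by_cases hjz : j = z0
            · rw [if_neg hij, if_pos (Or.inr hjz), if_neg hj, if_pos hjz]
              have : x j = a := by simp [hx, hjz]
              rw [this]; ring
            · rw [if_neg hij, if_neg (by tauto), if_neg hj, if_neg hjz]
              have : x j = b := by simp [hx, hjz]
              rw [this]; ring
        rw [Finset.sum_congr rfl (fun j _ => hterm j)]
        rw [Finset.sum_add_distrib, Finset.sum_add_distrib, Finset.sum_const,
          Finset.sum_ite_eq' Finset.univ i, Finset.sum_ite_eq' Finset.univ z0]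
        simp [Finset.card_univ]
        ring
    have houter : dotProduct x (Sx.mulVec x) =
        s1 * a ^ 2 + 2 * ((p : ℝ) - 1) * s12' * a * b +
          (((p : ℝ) - 1) * s2' + ((p : ℝ) - 1) * ((p : ℝ) - 2) * s2'3') * b ^ 2 := by
      have hdp : dotProduct x (Sx.mulVec x) = ∑ i, x i * (Sx.mulVec x) i := rfl
      rw [hdp]
      have hterm : ∀ i : Fin p, x i * (Sx.mulVec x) i =
          b * (s12' * a + s2' * b + ((p : ℝ) - 2) * (s2'3' * b)) +
            (if i = z0 then a * (s1 * a + ((p : ℝ) - 1) * (s12' * b)) -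
              b * (s12' * a + s2' * b + ((p : ℝ) - 2) * (s2'3' * b)) else 0) := by
        intro i
        rw [hinner i]
        by_cases hi : i = z0
        · rw [if_pos hi, if_pos hi]
          have : x i = a := by simp [hx, hi]
          rw [this]; ring
        · rw [if_neg hi, if_neg hi]
          have : x i = b := by simp [hx, hi]
          rw [this]; ring
      rw [Finset.sum_congr rfl (fun i _ => hterm i)]
      rw [Finset.sum_add_distrib, Finset.sum_const, Finset.sum_ite_eq' Finset.univ z0]
      simp [Finset.card_univ]
      ring
    rw [houter] at hpos
    exact hpos
  have hp1 : (0 : ℝ) < (p : ℝ) - 1 := by linarith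
  -- s1 > 0
  have hs1 : 0 < s1 := by
    have := key 1 0 (by simp)
    simpa using this
  -- N > 0
  set N : ℝ := s2' + ((p : ℝ) - 2) * s2'3' with hN
  have hNpos : 0 < N := by
    have h := key 0 1 (by simp)
    nlinarith [h]
  -- D > 0
  set D : ℝ := s1 * N - ((p : ℝ) - 1) * s12' ^ 2 with hD
  have hDpos : 0 < D := by
    have h := key (((p : ℝ) - 1) * s12') (-s1) (by
      rintro ⟨-, hb⟩
      nlinarith)
    have h2 : 0 < ((p : ℝ) - 1) * s1 * D := by
      have heq : ((p : ℝ) - 1) * s1 * D =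
          s1 * (((p : ℝ) - 1) * s12') ^ 2 +
            2 * ((p : ℝ) - 1) * s12' * (((p : ℝ) - 1) * s12') * (-s1) +
            (((p : ℝ) - 1) * s2' + ((p : ℝ) - 1) * ((p : ℝ) - 2) * s2'3') * (-s1) ^ 2 := by
        rw [hD, hN]; ring
      rw [heq]; exact h
    nlinarith [mul_pos hp1 hs1, h2]
  -- finish
  have hDeq : -((p : ℝ) - 1) * s12' ^ 2 + ((p : ℝ) - 2) * s1 * s2'3' + s1 * s2' = D := by
    rw [hD, hN]; ring
  have hNum : (((p : ℝ) - 2) * s2'3' + s2') = N := by rw [hN]; ring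
  rw [hDeq, hNum] at hr
  have hDne : D ≠ 0 := ne_of_gt hDpos
  have hrewrite : 2 * r11 - r11 ^ 2 * s1 = N * (2 * D - N * s1) / D ^ 2 := by
    rw [hr]; field_simp
  rw [hrewrite]
  apply div_neg_of_neg_of_pos
  · apply mul_neg_of_pos_of_neg hNpos
    have hc : N * s1 < 2 * ((p : ℝ) - 1) * s12' ^ 2 := by
      rw [hN]; nlinarith [hcond]
    rw [hD]; nlinarith
  · positivity
end
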